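/- arXiv:1511.01197 — 5 statements merged into one kernel-verified Lean document; each statement's English description precedes it below -/
import Mathlib

section
/- Let Γ ⊆ ℕⁿ × ℕ be a sub-semigroup and suppose the set Γ₁ := {v ∈ ℕⁿ : (v,1) ∈ Γ} contains points v₀, v₁, …, v_k such that the convex hull conv(v₀,…,v_k) equals the slice Δ(Γ) := closure(cone(Γ)) ∩ (ℝⁿ × {1}) (identified with a subset of ℝⁿ). If moreover all points of Γ at each height m lie in m·Δ(Γ), then the cone generated by Γ is the rational polyhedral cone generated by (v₀,1),…,(v_k,1). -/
open Set Pointwise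

/-- The convex cone generated by a set `S` in a real vector space: the set of all finite
nonnegative real combinations of elements of `S`. -/
def coneGen {E : Type*} [AddCommMonoid E] [Module ℝ E] (S : Set E) : Set E :=
  {x | ∃ (k : ℕ) (c : Fin k → ℝ) (v : Fin k → E),
    (∀ i, 0 ≤ c i) ∧ (∀ i, v i ∈ S) ∧ x = ∑ i, c i • v i}

/-- The embedding `ℕⁿ × ℕ → ℝⁿ⁺¹`, `(v, m) ↦ (v, m)`. -/
def toVec {n : ℕ} (p : (Fin n → ℕ) × ℕ) : Fin (n + 1) → ℝ :=
  Fin.snoc (fun i => (p.1 i : ℝ)) (p.2 : ℝ)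

/-- The Okounkov body of a sub-semigroup `Γ ⊆ ℕⁿ × ℕ`: the slice at last coordinate `1` of the
closed convex cone in `ℝⁿ⁺¹` generated by `Γ`, identified with a subset of `ℝⁿ`. -/
def okBody {n : ℕ} (Γ : Set ((Fin n → ℕ) × ℕ)) : Set (Fin n → ℝ) :=
  {v | Fin.snoc v (1 : ℝ) ∈ closure (coneGen (toVec '' Γ))}

section Aux

variable {E : Type*} [AddCommMonoid E] [Module ℝ E]

lemma coneGen_zero_mem (S : Set E) : (0 : E) ∈ coneGen S :=
  ⟨0, Fin.elim0, Fin.elim0, fun i => i.elim0, fun i => i.elim0, by simp⟩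

lemma coneGen_smul_mem {S : Set E} {c : ℝ} (hc : 0 ≤ c) {x : E} (hx : x ∈ coneGen S) :
    c • x ∈ coneGen S := by
  obtain ⟨k, d, w, hd, hw, rfl⟩ := hx
  exact ⟨k, fun i => c * d i, w, fun i => mul_nonneg hc (hd i), hw, by
    rw [Finset.smul_sum]; simp [mul_smul]⟩

lemma coneGen_add_mem {S : Set E} {x y : E} (hx : x ∈ coneGen S) (hy : y ∈ coneGen S) :
    x + y ∈ coneGen S := by
  obtain ⟨k₁, c₁, v₁, hc₁, hv₁, rfl⟩ := hx
  obtain ⟨k₂, c₂, v₂, hc₂, hv₂, rfl⟩ := hy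
  refine ⟨k₁ + k₂, Fin.append c₁ c₂, Fin.append v₁ v₂, ?_, ?_, ?_⟩
  · intro i
    refine Fin.addCases (fun j => ?_) (fun j => ?_) i
    · simpa [Fin.append_left] using hc₁ j
    · simpa [Fin.append_right] using hc₂ j
  · intro i
    refine Fin.addCases (fun j => ?_) (fun j => ?_) i
    · simpa [Fin.append_left] using hv₁ j
    · simpa [Fin.append_right] using hv₂ j
  · rw [Fin.sum_univ_add]
    simp [Fin.append_left, Fin.append_right]

lemma coneGen_sum_mem {S : Set E} {ι : Type*} (t : Finset ι) (f : ι → E)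
    (hf : ∀ i ∈ t, f i ∈ coneGen S) : ∑ i ∈ t, f i ∈ coneGen S := by
  classical
  induction t using Finset.induction with
  | empty => simpa using coneGen_zero_mem S
  | @insert a s hnot ih =>
    rw [Finset.sum_insert hnot]
    exact coneGen_add_mem (hf a (Finset.mem_insert_self a s))
      (ih fun i hi => hf i (Finset.mem_insert_of_mem hi))

lemma coneGen_self_mem {S : Set E} {x : E} (hx : x ∈ S) : x ∈ coneGen S :=
  ⟨1, fun _ => 1, fun _ => x, fun _ => zero_le_one, fun _ => hx, by simp⟩

lemma coneGen_subset_of_subset {S T : Set E} (h : S ⊆ coneGen T) : coneGen S ⊆ coneGen T := by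
  rintro x ⟨k, c, w, hc, hw, rfl⟩
  exact coneGen_sum_mem _ _ fun i _ => coneGen_smul_mem (hc i) (h (hw i))

end Aux

/-- Let `Γ ⊆ ℕⁿ × ℕ` be a sub-semigroup such that the level-one set
`Γ₁ = {v : (v,1) ∈ Γ}` contains points `v₀, …, v_k` whose convex hull equals the Okounkov body
`Δ(Γ)`, and such that every point of `Γ` at height `m` lies in `m • Δ(Γ)`.  Then the cone
generated by `Γ` is the rational polyhedral cone generated by `(v₀,1), …, (v_k,1)`. -/
theorem coneGen_eq_of_vertices_at_level_one (n k : ℕ) (Γ : Set ((Fin n → ℕ) × ℕ))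
    (hadd : ∀ a ∈ Γ, ∀ b ∈ Γ, a + b ∈ Γ)
    (v : Fin (k + 1) → (Fin n → ℕ))
    (hv : ∀ i, (v i, 1) ∈ Γ)
    (hhull : convexHull ℝ (Set.range fun i => fun j => ((v i j : ℝ))) = okBody Γ)
    (hin : ∀ p ∈ Γ, (fun j => (p.1 j : ℝ)) ∈ (p.2 : ℝ) • okBody Γ) :
    coneGen (toVec '' Γ) =
      coneGen (Set.range fun i => Fin.snoc (fun j => (v i j : ℝ)) (1 : ℝ)) := by
  apply Set.Subset.antisymm
  · -- ⊆ : each toVec p lies in the cone generated by the vertices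
    apply coneGen_subset_of_subset
    rintro x ⟨p, hp, rfl⟩
    -- p.1 (as real vector) = p.2 • y for some y in the convex hull of the vertices
    have hy := hin p hp
    rw [← hhull] at hy
    obtain ⟨y, hy, hyeq⟩ := Set.mem_smul_set.mp hy
    rw [mem_convexHull_iff_exists_fintype] at hy
    obtain ⟨ι, _, w, z, hw0, hw1, hz, hzy⟩ := hy
    -- toVec p = ∑ i, (p.2 * w i) • Fin.snoc (z i) 1
    have key : toVec p = ∑ i, ((p.2 : ℝ) * w i) • (Fin.snoc (z i) (1 : ℝ) : Fin (n+1) → ℝ) := by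
      funext x
      refine Fin.lastCases ?_ (fun j => ?_) x
      · have : (∑ i, ((p.2 : ℝ) * w i) • (Fin.snoc (z i) (1 : ℝ) : Fin (n+1) → ℝ)) (Fin.last n)
            = ∑ i, ((p.2 : ℝ) * w i) * ((Fin.snoc (z i) (1 : ℝ) : Fin (n+1) → ℝ) (Fin.last n)) := by
          simp [Finset.sum_apply]
        rw [this]
        simp only [Fin.snoc_last, mul_one, ← Finset.mul_sum, hw1, mul_one]
        simp [toVec]
      · have hR : (∑ i, ((p.2 : ℝ) * w i) • (Fin.snoc (z i) (1 : ℝ) : Fin (n+1) → ℝ)) (Fin.castSucc j)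
            = ∑ i, ((p.2 : ℝ) * w i) * z i j := by
          simp [Finset.sum_apply]
        rw [hR]
        have hL : toVec p (Fin.castSucc j) = (p.1 j : ℝ) := by simp [toVec]
        rw [hL]
        have : (p.1 j : ℝ) = (p.2 : ℝ) * y j := by
          have := congrFun hyeq j
          simpa using this.symm
        rw [this, ← hzy]
        simp only [Finset.sum_apply, Pi.smul_apply, smul_eq_mul, Finset.mul_sum, mul_assoc]
    rw [key]
    refine coneGen_sum_mem _ _ fun i _ => coneGen_smul_mem
      (mul_nonneg (Nat.cast_nonneg _) (hw0 i)) (coneGen_self_mem ?_)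
    obtain ⟨j, hj⟩ := hz i
    exact ⟨j, by rw [← hj]⟩
  · -- ⊇ : each vertex lies in toVec '' Γ
    apply coneGen_subset_of_subset
    rintro x ⟨i, rfl⟩
    refine coneGen_self_mem ⟨(v i, 1), hv i, ?_⟩
    simp [toVec]
end

section
/- Gordan's lemma: the monoid of lattice points in a rational polyhedral convex cone in ℝⁿ is finitely generated. -/
open Set

/-- **Gordan's lemma.** The monoid of lattice points in a rational polyhedral
convex cone in `ℝⁿ` (the cone of nonnegative real combinations of finitely many integral
vectors) is finitely generated as a monoid. -/
theorem gordan (n k : ℕ) (v : Fin k → (Fin n → ℤ))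
    (M : Set (Fin n → ℤ))
    (hM : M = {x : Fin n → ℤ | (fun i => (x i : ℝ)) ∈
      coneGen (Set.range fun j => fun i => ((v j i : ℝ)))}) :
    ∃ G : Finset (Fin n → ℤ), ↑G ⊆ M ∧
      ∀ x ∈ M, x ∈ AddSubmonoid.closure (G : Set (Fin n → ℤ)) := by
  classical
  set V : Fin k → (Fin n → ℝ) := fun j i => (v j i : ℝ) with hV
  set P : Set (Fin n → ℤ) :=
    {x | ∃ t : Fin k → ℝ, (∀ j, 0 ≤ t j) ∧ (∀ j, t j ≤ 1) ∧
      (fun i => (x i : ℝ)) = ∑ j, t j • V j} with hP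
  have hPfin : P.Finite := by
    set N : ℤ := ∑ j, ∑ i, |v j i| with hN
    apply Set.Finite.subset
      ((Set.Finite.pi (fun i : Fin n => Set.finite_Icc (-N) N)))
    rintro x ⟨t, ht0, ht1, hx⟩ i _
    have hxi : (x i : ℝ) = ∑ j, t j * (v j i : ℝ) := by
      have := congrFun hx i
      simpa [V] using this
    have hb : |(x i : ℝ)| ≤ (N : ℝ) := by
      rw [hxi]
      calc |∑ j, t j * (v j i : ℝ)| ≤ ∑ j, |t j * (v j i : ℝ)| :=
            Finset.abs_sum_le_sum_abs _ _
        _ ≤ ∑ j, |(v j i : ℝ)| := by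
            refine Finset.sum_le_sum fun j _ => ?_
            rw [abs_mul]
            have : |t j| ≤ 1 := abs_le.mpr ⟨by linarith [ht0 j], ht1 j⟩
            nlinarith [abs_nonneg (v j i : ℝ), abs_nonneg (t j)]
        _ ≤ (N : ℝ) := by
            push_cast [hN]
            refine Finset.sum_le_sum fun j _ => ?_
            exact Finset.single_le_sum (f := fun i' => |(v j i' : ℝ)|) (fun i' _ => abs_nonneg _) (Finset.mem_univ i)
    have : |x i| ≤ N := by
      rw [← Int.cast_abs] at hb
      exact_mod_cast hb
    exact Set.mem_Icc.mpr (abs_le.mp this)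
  have hGfin : (M ∩ P).Finite := hPfin.subset Set.inter_subset_right
  refine ⟨hGfin.toFinset, ?_, ?_⟩
  · intro x hx
    rw [Set.Finite.coe_toFinset] at hx
    exact hx.1
  intro x hx
  have hx' := hx
  rw [hM] at hx'
  obtain ⟨m, c, w, hc0, hw, hxe⟩ := hx'
  choose g hg using hw
  set d : Fin k → ℝ := fun j => ∑ i ∈ Finset.univ.filter (fun i => g i = j), c i with hd
  have hd0 : ∀ j, 0 ≤ d j := fun j => Finset.sum_nonneg fun i _ => hc0 i
  have key : (fun i => ((x i : ℝ))) = ∑ j, d j • V j := by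
    rw [hxe]
    calc ∑ i, c i • w i = ∑ i, c i • V (g i) :=
          Finset.sum_congr rfl fun i _ => by rw [hg]
      _ = ∑ j, ∑ i ∈ Finset.univ.filter (fun i => g i = j), c i • V (g i) :=
          (Finset.sum_fiberwise _ _ _).symm
      _ = ∑ j, ∑ i ∈ Finset.univ.filter (fun i => g i = j), c i • V j := by
          refine Finset.sum_congr rfl fun j _ => Finset.sum_congr rfl fun i hi => ?_
          rw [(Finset.mem_filter.mp hi).2]
      _ = ∑ j, d j • V j := by
          simp [hd, Finset.sum_smul]
  set q : Fin k → ℕ := fun j => ⌊d j⌋₊ with hq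
  set r : Fin n → ℤ := x - ∑ j, (q j : ℤ) • v j with hr
  have hfrac0 : ∀ j, 0 ≤ d j - (q j : ℝ) := fun j => sub_nonneg.mpr (Nat.floor_le (hd0 j))
  have hfrac1 : ∀ j, d j - (q j : ℝ) ≤ 1 := fun j => by
    have := Nat.lt_floor_add_one (d j)
    have : d j < (q j : ℝ) + 1 := by exact_mod_cast this
    linarith
  have hrreal : (fun i => ((r i : ℝ))) = ∑ j, (d j - (q j : ℝ)) • V j := by
    funext i
    have hxi : (x i : ℝ) = ∑ j, d j * (v j i : ℝ) := by
      have := congrFun key i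
      simpa [V] using this
    simp only [hr, Pi.sub_apply, Finset.sum_apply, Pi.smul_apply, smul_eq_mul, sub_mul,
      Finset.sum_sub_distrib, V]
    push_cast
    rw [hxi]
  have hrM : r ∈ M := by
    rw [hM]
    exact ⟨k, fun j => d j - (q j : ℝ), V, hfrac0, fun j => ⟨j, rfl⟩, hrreal⟩
  have hrP : r ∈ P := ⟨fun j => d j - (q j : ℝ), hfrac0, hfrac1, hrreal⟩
  have hvreal : ∀ j, (fun i => ((v j i : ℝ))) = ∑ j', (if j' = j then (1:ℝ) else 0) • V j' := by
    intro j
    simp [ite_smul, Finset.sum_ite_eq', V]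
  have hvM : ∀ j, v j ∈ M := fun j => by
    rw [hM]
    exact ⟨k, fun j' => if j' = j then 1 else 0, V,
      fun j' => by by_cases h : j' = j <;> simp [h], fun j' => ⟨j', rfl⟩, hvreal j⟩
  have hvP : ∀ j, v j ∈ P := fun j =>
    ⟨fun j' => if j' = j then 1 else 0, fun j' => by by_cases h : j' = j <;> simp [h],
      fun j' => by by_cases h : j' = j <;> simp [h], hvreal j⟩
  have hxdecomp : x = (∑ j, (q j : ℤ) • v j) + r := by
    simp [hr]
  rw [hxdecomp]
  refine AddSubmonoid.add_mem _ (AddSubmonoid.sum_mem _ fun j _ => ?_)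
    (AddSubmonoid.subset_closure ?_)
  · rw [show ((q j : ℤ) • v j) = q j • v j from natCast_zsmul _ _]
    refine nsmul_mem (AddSubmonoid.subset_closure ?_) _
    rw [Set.Finite.coe_toFinset]
    exact ⟨hvM j, hvP j⟩
  · rw [Set.Finite.coe_toFinset]
    exact ⟨hrM, hrP⟩
end

section
/- A convex cone in ℝᵐ generated by finitely many vectors is a closed subset of ℝᵐ. -/
open Finset Topology

lemma cone_finset_isClosed (m k : ℕ) (v : Fin k → (Fin m → ℝ)) (s : Finset (Fin k)) :
    IsClosed {x : Fin m → ℝ |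
      ∃ t : Fin k → ℝ, (∀ i, 0 ≤ t i) ∧ (∀ i ∉ s, t i = 0) ∧ x = ∑ i ∈ s, t i • v i} := by
  classical
  induction s using Finset.strongInduction with
  | _ s ih =>
  by_cases hLI : LinearIndependent ℝ (fun i : s => v i)
  · -- linearly independent case: image of closed orthant under a closed embedding
    set L : (s → ℝ) →ₗ[ℝ] (Fin m → ℝ) :=
      LinearMap.lsum ℝ (fun _ : s ↦ ℝ) ℕ (fun i ↦ LinearMap.id.smulRight (v i)) with hL
    have hLapp : ∀ t : s → ℝ, L t = ∑ i : s, t i • v i := by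
      intro t
      simp [hL, LinearMap.lsum_apply]
    have hker : LinearMap.ker L = ⊥ := by
      rw [LinearMap.ker_eq_bot']
      intro t ht
      have := Fintype.linearIndependent_iff.mp hLI t (by rw [← hLapp]; exact ht)
      funext i; exact this i
    have hemb : IsClosedEmbedding L := L.isClosedEmbedding_of_injective hker
    have hset : {x : Fin m → ℝ |
        ∃ t : Fin k → ℝ, (∀ i, 0 ≤ t i) ∧ (∀ i ∉ s, t i = 0) ∧ x = ∑ i ∈ s, t i • v i} =
        L '' {t : s → ℝ | ∀ i, 0 ≤ t i} := by
      ext x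
      constructor
      · rintro ⟨t, ht0, -, rfl⟩
        refine ⟨fun i => t i, fun i => ht0 i, ?_⟩
        rw [hLapp, Finset.sum_coe_sort s (fun i => t i • v i)]
      · rintro ⟨t, ht0, rfl⟩
        refine ⟨fun i => if h : i ∈ s then t ⟨i, h⟩ else 0, ?_, ?_, ?_⟩
        · intro i
          by_cases h : i ∈ s
          · simpa [h] using ht0 ⟨i, h⟩
          · simp [h]
        · intro i hi; simp [hi]
        · rw [hLapp, Finset.sum_coe_sort_eq_attach,
            ← Finset.sum_attach s (fun i => (if h : i ∈ s then t ⟨i, h⟩ else 0) • v i)]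
          apply Finset.sum_congr rfl
          intro i _
          simp [i.2]
    rw [hset]
    have horth : IsClosed {t : s → ℝ | ∀ i, 0 ≤ t i} := by
      have heq : {t : s → ℝ | ∀ i, 0 ≤ t i} = ⋂ i, {t : s → ℝ | 0 ≤ t i} := by
        ext t; simp [Set.mem_iInter]
      rw [heq]
      exact isClosed_iInter fun i => isClosed_le continuous_const (continuous_apply i)
    exact hemb.isClosedMap _ horth
  · -- dependent case: reduce to smaller subsets
    obtain ⟨g, hgsum, jne, hjne⟩ := Fintype.not_linearIndependent_iff.mp hLI
    obtain ⟨c, hcs, hcsum, j0, hj0s, hj0⟩ :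
        ∃ c : Fin k → ℝ, (∀ i ∉ s, c i = 0) ∧ (∑ i ∈ s, c i • v i = 0) ∧
          ∃ j ∈ s, c j < 0 := by
      rcases lt_or_gt_of_ne hjne with hneg | hpos
      · refine ⟨fun i => if h : i ∈ s then g ⟨i, h⟩ else 0, fun i hi => by simp [hi], ?_,
          jne, jne.2, by simpa [jne.2] using hneg⟩
        rw [← Finset.sum_attach s (fun i => (if h : i ∈ s then g ⟨i, h⟩ else 0) • v i)]
        rw [← hgsum, Finset.sum_coe_sort_eq_attach]
        exact Finset.sum_congr rfl fun i _ => by simp [i.2]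
      · refine ⟨fun i => if h : i ∈ s then -g ⟨i, h⟩ else 0, fun i hi => by simp [hi], ?_,
          jne, jne.2, by simpa [jne.2] using hpos⟩
        rw [← Finset.sum_attach s (fun i => (if h : i ∈ s then -g ⟨i, h⟩ else 0) • v i)]
        have h0 : ∑ i : s, (-g i) • v i = 0 := by
          simp only [neg_smul, Finset.sum_neg_distrib, hgsum, neg_zero]
        rw [← h0, Finset.sum_coe_sort_eq_attach]
        exact Finset.sum_congr rfl fun i _ => by simp [i.2]
    set S : Finset (Fin k) := s.filter (fun i => c i < 0) with hS
    have hSne : S.Nonempty := ⟨j0, by simp [hS, hj0s, hj0]⟩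
    have key : {x : Fin m → ℝ |
        ∃ t : Fin k → ℝ, (∀ i, 0 ≤ t i) ∧ (∀ i ∉ s, t i = 0) ∧ x = ∑ i ∈ s, t i • v i} =
        ⋃ j ∈ S, {x : Fin m → ℝ |
          ∃ t : Fin k → ℝ, (∀ i, 0 ≤ t i) ∧ (∀ i ∉ s.erase j, t i = 0) ∧
            x = ∑ i ∈ s.erase j, t i • v i} := by
      ext x
      simp only [Set.mem_setOf_eq, Set.mem_iUnion]
      constructor
      · rintro ⟨t, ht0, hts, rfl⟩
        obtain ⟨j, hjS, hjmin⟩ := Finset.exists_mem_eq_inf' hSne (fun i => t i / (-c i))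
        have hjs : j ∈ s := (Finset.mem_filter.mp hjS).1
        have hcj : c j < 0 := (Finset.mem_filter.mp hjS).2
        set lam := S.inf' hSne (fun i => t i / (-c i)) with hlam
        have hlam0 : 0 ≤ lam := by
          rw [hlam]
          apply Finset.le_inf'
          intro i hi
          have hci : c i < 0 := (Finset.mem_filter.mp hi).2
          exact div_nonneg (ht0 i) (by linarith)
        have hjzero : t j + lam * c j = 0 := by
          have h1 : lam = t j / (-c j) := hjmin
          have h2 : (t j / (-c j)) * c j = -t j := by
            rw [div_mul_eq_mul_div, mul_div_assoc, div_neg, div_self (ne_of_lt hcj),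
              mul_neg, mul_one]
          rw [h1, h2]; ring
        refine ⟨j, hjS, fun i => t i + lam * c i, ?_, ?_, ?_⟩
        · intro i
          show 0 ≤ t i + lam * c i
          by_cases hiS : i ∈ S
          · have hci : c i < 0 := (Finset.mem_filter.mp hiS).2
            have h1 : lam ≤ t i / (-c i) := Finset.inf'_le _ hiS
            have h2 := (le_div_iff₀ (by linarith : (0:ℝ) < -c i)).mp h1
            nlinarith
          · by_cases his : i ∈ s
            · have h3 : ¬ c i < 0 := fun h => hiS (Finset.mem_filter.mpr ⟨his, h⟩)
              nlinarith [ht0 i, mul_nonneg hlam0 (not_lt.mp h3)]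
            · simp [hcs i his, hts i his]
        · intro i hi
          by_cases his : i ∈ s
          · have : i = j := by
              by_contra hij
              exact hi (Finset.mem_erase.mpr ⟨hij, his⟩)
            subst this
            exact hjzero
          · simp [hcs i his, hts i his]
        · have hsum : ∑ i ∈ s, (t i + lam * c i) • v i = ∑ i ∈ s, t i • v i := by
            simp only [add_smul, Finset.sum_add_distrib]
            have h4 : ∑ i ∈ s, (lam * c i) • v i = lam • ∑ i ∈ s, c i • v i := by
              rw [Finset.smul_sum]
              exact Finset.sum_congr rfl fun i _ => by rw [smul_smul]
            rw [h4, hcsum, smul_zero, add_zero]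
          rw [← hsum, ← Finset.sum_erase_add s _ hjs, hjzero, zero_smul, add_zero]
      · rintro ⟨j, hjS, t, ht0, hts, rfl⟩
        have hjs : j ∈ s := (Finset.mem_filter.mp hjS).1
        refine ⟨t, ht0, fun i hi => hts i (fun h => hi (Finset.mem_of_mem_erase h)), ?_⟩
        rw [← Finset.sum_erase_add s _ hjs, hts j (Finset.notMem_erase j s),
          zero_smul, add_zero]
    rw [key]
    apply Set.Finite.isClosed_biUnion (Finset.finite_toSet S)
    intro j hjS
    exact ih (s.erase j) (Finset.erase_ssubset (Finset.mem_filter.mp hjS).1)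

/-- A convex cone in `ℝᵐ` generated by finitely many vectors
`v₁, …, v_k`, i.e. the set `{t₁ • v₁ + ⋯ + t_k • v_k : tᵢ ≥ 0}`, is a closed subset of `ℝᵐ`
in the Euclidean topology. -/
theorem finitely_generated_cone_isClosed (m k : ℕ) (v : Fin k → (Fin m → ℝ)) :
    IsClosed {x : Fin m → ℝ |
      ∃ t : Fin k → ℝ, (∀ i, 0 ≤ t i) ∧ x = ∑ i, t i • v i} := by
  have h := cone_finset_isClosed m k v Finset.univ
  convert h using 2
  ext x
  simp
end

section
/- Let Γ ⊆ ℕⁿ × ℕ be a semigroup, and suppose every element of Γ with last coordinate m lies in m·Δ for the simplex Δ = conv(0, c·e₁, …, c·e_{n-1}, c·d·e_n), and that the points (0,1), (c·e₁,1), …, (c·e_{n-1},1), (c·d·e_n,1) all lie in Γ. Then Γ is finitely generated. -/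
open Set Pointwise

/-- Finite basis property for a PWO set. -/
lemma exists_finite_basis {α : Type*} [Preorder α] {S : Set α} (hS : S.IsPWO) :
    ∃ B : Finset α, ↑B ⊆ S ∧ ∀ s ∈ S, ∃ b ∈ B, b ≤ s := by
  classical
  by_contra h
  push_neg at h
  -- h : ∀ B : Finset α, ↑B ⊆ S → ∃ s ∈ S, ∀ b ∈ B, ¬ b ≤ s
  obtain ⟨s₀, hs₀, -⟩ := h ∅ (by simp)
  set pick : Finset α → α := fun B =>
    if hB : (↑B : Set α) ⊆ S then (h B hB).choose else s₀ with hpick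
  have hpickS : ∀ B : Finset α, (↑B : Set α) ⊆ S →
      pick B ∈ S ∧ ∀ b ∈ B, ¬ b ≤ pick B := by
    intro B hB
    simp only [hpick, dif_pos hB]
    obtain ⟨h1, h2⟩ := (h B hB).choose_spec
    exact ⟨h1, h2⟩
  set Bn : ℕ → Finset α := fun n => Nat.rec ∅ (fun _ B => insert (pick B) B) n with hBn
  have hBsucc : ∀ n, Bn (n + 1) = insert (pick (Bn n)) (Bn n) := fun n => rfl
  have hBsub : ∀ n, (↑(Bn n) : Set α) ⊆ S := by
    intro n
    induction n with
    | zero => simp [hBn]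
    | succ m ih =>
      rw [hBsucc]
      push_cast
      exact Set.insert_subset ((hpickS _ ih).1) ih
  have hmono : ∀ m n, m ≤ n → Bn m ⊆ Bn n := by
    intro m n hmn
    induction n with
    | zero => simp_all
    | succ k ih =>
      rcases Nat.lt_succ_iff_lt_or_eq.mp (Nat.lt_succ_of_le hmn) with h' | h'
      · exact (ih (Nat.lt_succ_iff.mp h')).trans
          (by rw [hBsucc]; exact Finset.subset_insert _ _)
      · subst h'; rfl
  set f : ℕ → α := fun n => pick (Bn n) with hf
  have hfS : ∀ n, f n ∈ S := fun n => (hpickS _ (hBsub n)).1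
  obtain ⟨m, n, hmn, hle⟩ := hS (fun k => ⟨f k, hfS k⟩)
  have hfmem : f m ∈ Bn n := by
    have h1 : f m ∈ Bn (m + 1) := by rw [hBsucc]; exact Finset.mem_insert_self _ _
    exact hmono _ _ hmn h1
  exact (hpickS _ (hBsub n)).2 _ hfmem hle

lemma isPWO_any {n : ℕ} (S : Set ((Fin n → ℕ) × ℕ)) : S.IsPWO := by
  haveI : IsWellOrder ℕ (· < ·) := inferInstance
  have h1 : (Set.univ : Set (Fin n → ℕ)).IsPWO := Set.isPWO_of_wellQuasiOrderedLE _
  have h2 : (Set.univ : Set ℕ).IsPWO := (Set.isWF_univ_iff.mpr inferInstance).isPWO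
  exact (h1.prod h2).mono (by simp [Set.subset_univ])

/-- Let `Γ ⊆ ℕⁿ × ℕ` be a semigroup such that every element of `Γ` at
height `m` lies in `m • Δ` for the simplex `Δ = conv(0, c·e₁, …, c·e_{n-1}, c·d·e_n)`, and
such that `(0,1), (c·e₁,1), …, (c·e_{n-1},1), (c·d·e_n,1)` all lie in `Γ`.  Then `Γ` is
finitely generated. -/
theorem sandwiched_semigroup_fg (n : ℕ) (hn : 0 < n) (c d : ℕ) (hc : 0 < c) (hd : 0 < d)
    (Γ : Set ((Fin n → ℕ) × ℕ))
    (hadd : ∀ a ∈ Γ, ∀ b ∈ Γ, a + b ∈ Γ)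
    (Δ : Set (Fin n → ℝ))
    (hΔ : Δ = convexHull ℝ (insert (0 : Fin n → ℝ)
      {x | ∃ i : Fin n,
        x = Pi.single i (if i.val = n - 1 then ((c * d : ℕ) : ℝ) else (c : ℝ))}))
    (hunder : ∀ p ∈ Γ, (fun i => (p.1 i : ℝ)) ∈ (p.2 : ℝ) • Δ)
    (hzero : ((0 : Fin n → ℕ), 1) ∈ Γ)
    (hvert : ∀ i : Fin n,
      ((Pi.single i (if i.val = n - 1 then c * d else c) : Fin n → ℕ), 1) ∈ Γ) :
    ∃ G : Finset ((Fin n → ℕ) × ℕ), ↑G ⊆ Γ ∧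
      ∀ x ∈ Γ, x ∈ AddSubmonoid.closure (G : Set ((Fin n → ℕ) × ℕ)) := by
  classical
  set w : Fin n → ℕ := fun i => if i.val = n - 1 then c * d else c with hw_def
  have hw : ∀ i, 0 < w i := by
    intro i; simp only [hw_def]; split <;> positivity
  set vert : Fin n → (Fin n → ℕ) × ℕ := fun i => (Pi.single i (w i), 1) with hvert_def
  have hvΓ : ∀ i, vert i ∈ Γ := fun i => hvert i
  -- the half-space inequality on Δ
  have hlin : IsLinearMap ℝ (fun x : Fin n → ℝ => ∑ i, x i * (w i : ℝ)⁻¹) :=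
    ⟨fun x y => by simp [add_mul, Finset.sum_add_distrib],
     fun a x => by simp [Finset.mul_sum, mul_assoc]⟩
  have hΔle : ∀ x ∈ Δ, ∑ i, x i * (w i : ℝ)⁻¹ ≤ 1 := by
    rw [hΔ]
    intro x hx
    refine convexHull_min ?_ (convex_halfSpace_le hlin 1) hx
    rintro y (rfl | ⟨i, rfl⟩)
    · simp
    · simp only [Set.mem_setOf_eq]
      have hyi : (if i.val = n - 1 then ((c * d : ℕ) : ℝ) else (c : ℝ)) = ((w i : ℕ) : ℝ) := by
        simp only [hw_def]; split <;> push_cast <;> ring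
      rw [hyi]
      have : ∑ j, (Pi.single i ((w i : ℕ) : ℝ) : Fin n → ℝ) j * ((w j : ℕ) : ℝ)⁻¹ = 1 := by
        rw [Finset.sum_eq_single i]
        · rw [Pi.single_eq_same, mul_inv_cancel₀ (by exact_mod_cast (hw i).ne')]
        · intro j _ hj; rw [Pi.single_eq_of_ne hj, zero_mul]
        · simp
      rw [this]
  -- key inequality in ℕ
  have hkey : ∀ p ∈ Γ, ∑ i, p.1 i / w i ≤ p.2 := by
    intro p hp
    obtain ⟨x, hx, hEq⟩ := hunder p hp
    have h1 : ∀ i, (p.1 i : ℝ) = (p.2 : ℝ) * x i := fun i => (congrFun hEq i).symm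
    have h2 : ∑ i, (p.1 i : ℝ) * (w i : ℝ)⁻¹ ≤ (p.2 : ℝ) := by
      calc ∑ i, (p.1 i : ℝ) * (w i : ℝ)⁻¹ = (p.2 : ℝ) * ∑ i, x i * (w i : ℝ)⁻¹ := by
            rw [Finset.mul_sum]; exact Finset.sum_congr rfl fun i _ => by rw [h1 i, mul_assoc]
        _ ≤ (p.2 : ℝ) * 1 := mul_le_mul_of_nonneg_left (hΔle x hx) (by positivity)
        _ = (p.2 : ℝ) := mul_one _
    have h3 : ((∑ i, p.1 i / w i : ℕ) : ℝ) ≤ (p.2 : ℝ) := by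
      refine le_trans ?_ h2
      push_cast
      refine Finset.sum_le_sum fun i _ => ?_
      rw [← div_eq_mul_inv]
      exact Nat.cast_div_le
    exact_mod_cast h3
  -- the sigma map
  set Sm : (Fin n → ℕ) × ℕ → (Fin n → ℕ) × ℕ :=
    fun k => ((fun i => k.1 i * w i), k.2 + ∑ i, k.1 i) with hSm_def
  have hSadd : ∀ k k', Sm (k + k') = Sm k + Sm k' := by
    intro k k'
    refine Prod.ext (funext fun i => ?_) ?_
    · simp [hSm_def, add_mul]
    · simp [hSm_def, Finset.sum_add_distrib]; ring
  set V : Set ((Fin n → ℕ) × ℕ) := insert ((0 : Fin n → ℕ), 1) (Set.range vert) with hV_def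
  have hVΓ : V ⊆ Γ := by
    rintro v (rfl | ⟨i, rfl⟩)
    · exact hzero
    · exact hvΓ i
  -- Sm k lies in the closure of V
  have hSV0 : ∀ (N : ℕ) (k : (Fin n → ℕ) × ℕ), k.2 + ∑ i, k.1 i = N →
      Sm k ∈ AddSubmonoid.closure V := by
    intro N
    induction N with
    | zero =>
      intro k hk
      have h2 : k.2 = 0 := by omega
      have h1 : ∀ i, k.1 i = 0 := by
        intro i
        have := Finset.single_le_sum (f := k.1) (fun j _ => Nat.zero_le _) (Finset.mem_univ i)
        omega
      have hz : Sm k = 0 := by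
        refine Prod.ext (funext fun j => ?_) ?_ <;> simp [hSm_def, h1, h2]
      rw [hz]; exact AddSubmonoid.zero_mem _
    | succ N ih =>
      intro k hk
      by_cases h2 : 0 < k.2
      · have heq : Sm k = Sm (k.1, k.2 - 1) + ((0 : Fin n → ℕ), 1) := by
          refine Prod.ext (funext fun j => ?_) ?_
          · simp [hSm_def]
          · simp only [hSm_def, Prod.snd_add]; omega
        rw [heq]
        refine AddSubmonoid.add_mem _ (ih _ ?_)
          (AddSubmonoid.subset_closure (Set.mem_insert _ _))
        show k.2 - 1 + ∑ i, k.1 i = N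
        omega
      · have hex : ∃ i, 0 < k.1 i := by
          by_contra hcon
          push_neg at hcon
          have hs : ∑ i, k.1 i = 0 := Finset.sum_eq_zero fun i _ => Nat.le_zero.mp (hcon i)
          omega
        obtain ⟨i, hi⟩ := hex
        obtain ⟨t, ht⟩ : ∃ t, k.1 i = t + 1 := ⟨k.1 i - 1, by omega⟩
        set e1 : Fin n → ℕ := Pi.single i 1 with he1_def
        have he1 : ∀ j, e1 j = if j = i then 1 else 0 := by
          intro j
          rcases eq_or_ne j i with rfl | hj
          · simp [he1_def]
          · simp [he1_def, Pi.single_eq_of_ne hj, hj]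
        have hsum : ∑ j, k.1 j = (∑ j, (k.1 j - e1 j)) + 1 := by
          have hpt : ∀ j, k.1 j = (k.1 j - e1 j) + e1 j := by
            intro j
            rcases eq_or_ne j i with rfl | hj
            · rw [he1]; simp; omega
            · rw [he1]; simp [hj]
          calc ∑ j, k.1 j = ∑ j, ((k.1 j - e1 j) + e1 j) :=
                Finset.sum_congr rfl fun j _ => hpt j
            _ = (∑ j, (k.1 j - e1 j)) + ∑ j, e1 j := by
                rw [Finset.sum_add_distrib]
            _ = (∑ j, (k.1 j - e1 j)) + 1 := by
                congr 1
                rw [Finset.sum_eq_single i]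
                · rw [he1]; simp
                · intro j _ hj; rw [he1]; simp [hj]
                · simp
        have heq : Sm k = Sm ((fun j => k.1 j - e1 j), k.2) + vert i := by
          refine Prod.ext (funext fun j => ?_) ?_
          · show k.1 j * w j = (k.1 j - e1 j) * w j + (Pi.single i (w i) : Fin n → ℕ) j
            rcases eq_or_ne j i with rfl | hj
            · rw [Pi.single_eq_same, he1, if_pos rfl, ht, Nat.add_sub_cancel]
              ring
            · rw [Pi.single_eq_of_ne hj, he1, if_neg hj, Nat.sub_zero, add_zero]
          · show k.2 + ∑ j, k.1 j = (k.2 + ∑ j, (k.1 j - e1 j)) + 1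
            omega
        rw [heq]
        refine AddSubmonoid.add_mem _ (ih _ ?_)
          (AddSubmonoid.subset_closure (Set.mem_insert_of_mem _ ⟨i, rfl⟩))
        show k.2 + ∑ j, (k.1 j - e1 j) = N
        omega
  have hSV : ∀ k, Sm k ∈ AddSubmonoid.closure V := fun k => hSV0 _ k rfl
  -- adding closure elements of Γ
  have hΓadd : ∀ (s : (Fin n → ℕ) × ℕ), s ∈ AddSubmonoid.closure Γ → ∀ γ ∈ Γ, γ + s ∈ Γ := by
    intro s hs
    induction hs using AddSubmonoid.closure_induction with
    | mem x hx => exact fun γ hγ => hadd γ hγ x hx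
    | zero => exact fun γ hγ => by simpa using hγ
    | add x y hx hy ihx ihy =>
      intro γ hγ
      rw [← add_assoc]
      exact ihy _ (ihx γ hγ)
  -- decomposition of elements of Γ
  have hdec : ∀ p ∈ Γ, p = ((fun i => p.1 i % w i), 0) +
      Sm ((fun i => p.1 i / w i), p.2 - ∑ i, p.1 i / w i) := by
    intro p hp
    have h := hkey p hp
    refine Prod.ext (funext fun i => ?_) ?_
    · simp only [Prod.fst_add, Pi.add_apply, hSm_def]
      exact (Nat.mod_add_div' (p.1 i) (w i)).symm
    · simp only [Prod.snd_add, hSm_def]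
      omega
  -- remainder set is finite
  set R : Set (Fin n → ℕ) := {r | ∀ i, r i < w i} with hR_def
  have hRfin : R.Finite := by
    have hReq : R = Set.pi Set.univ (fun i => Set.Iio (w i)) := by
      ext r; simp [hR_def, Set.mem_pi]
    rw [hReq]
    exact Set.Finite.pi fun i => Set.finite_Iio _
  -- ideal bases by Dickson
  set T : (Fin n → ℕ) → Set ((Fin n → ℕ) × ℕ) := fun r => {k | (r, 0) + Sm k ∈ Γ} with hT_def
  choose B hB1 hB2 using fun r => exists_finite_basis (isPWO_any (T r))
  -- generator set
  set Gset : Set ((Fin n → ℕ) × ℕ) :=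
    (⋃ r ∈ R, (fun k => (r, (0 : ℕ)) + Sm k) '' ↑(B r)) ∪ V with hGset_def
  have hGfin : Gset.Finite := by
    refine Set.Finite.union (Set.Finite.biUnion hRfin fun r _ => ?_) ?_
    · exact (Finset.finite_toSet _).image _
    · exact (Set.finite_range vert).insert _
  refine ⟨hGfin.toFinset, ?_, ?_⟩
  · rw [Set.Finite.coe_toFinset]
    rintro g (hg | hg)
    · simp only [Set.mem_iUnion] at hg
      obtain ⟨r, -, k, hk, rfl⟩ := hg
      exact hB1 r hk
    · exact hVΓ hg
  · intro x hx
    rw [Set.Finite.coe_toFinset]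
    set r : Fin n → ℕ := fun i => x.1 i % w i with hr_def
    set k : (Fin n → ℕ) × ℕ := ((fun i => x.1 i / w i), x.2 - ∑ i, x.1 i / w i) with hk_def
    have hrR : ∀ i, r i < w i := fun i => Nat.mod_lt _ (hw i)
    have hxd : x = (r, 0) + Sm k := hdec x hx
    have hkT : k ∈ T r := by
      show (r, 0) + Sm k ∈ Γ
      rw [← hxd]; exact hx
    obtain ⟨b, hbB, hbk⟩ := hB2 r k hkT
    have hble1 : ∀ j, b.1 j ≤ k.1 j := fun j => hbk.1 j
    have hble2 : b.2 ≤ k.2 := hbk.2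
    clear_value k r
    have hksplit : k = b + ((fun j => k.1 j - b.1 j), k.2 - b.2) := by
      refine Prod.ext (funext fun j => ?_) ?_
      · show k.1 j = b.1 j + (k.1 j - b.1 j)
        have := hble1 j
        omega
      · show k.2 = b.2 + (k.2 - b.2)
        omega
    have hxd2 : x = ((r, 0) + Sm b) + Sm ((fun j => k.1 j - b.1 j), k.2 - b.2) := by
      rw [hxd, add_assoc, ← hSadd, ← hksplit]
    rw [hxd2]
    refine AddSubmonoid.add_mem _ (AddSubmonoid.subset_closure ?_) ?_
    · refine Set.mem_union_left _ ?_
      simp only [Set.mem_iUnion]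
      exact ⟨r, hrR, b, hbB, rfl⟩
    · exact AddSubmonoid.closure_mono (Set.subset_union_right) (hSV _)
end

section
/- Any intermediate monoid N ⊆ Γ ⊆ M, where N is a finitely generated monoid, M is a commutative cancellative monoid that is a finitely generated N-module (M = ⋃ᵢ(mᵢ + N) for finitely many mᵢ), is itself finitely generated. -/
/-- Every subset of `ι → ℕ` (finite `ι`) is dominated from below by finitely many
of its elements (Dickson's lemma / minimal elements). -/
lemma dickson_lower_bounds {ι : Type*} [Finite ι] (S : Set (ι → ℕ)) :
    ∃ F : Finset (ι → ℕ), ↑F ⊆ S ∧ ∀ a ∈ S, ∃ f ∈ F, f ≤ a := by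
  classical
  have hpwo : S.IsPWO := by
    have : IsWellOrder ℕ (· < · : ℕ → ℕ → Prop) := inferInstance
    exact Set.isPWO_of_wellQuasiOrderedLE S
  set Min : Set (ι → ℕ) := {a | a ∈ S ∧ ∀ b ∈ S, b ≤ a → b = a} with hMin
  have hanti : IsAntichain (· ≤ ·) Min := by
    intro a ha b hb hne hab
    exact hne (hb.2 a ha.1 hab)
  have hfin : Min.Finite :=
    hanti.finite_of_partiallyWellOrderedOn ((hpwo.mono (fun x hx => hx.1)))
  have wf : S.IsWF := hpwo.isWF
  have hmin : ∀ a ∈ S, ∃ m ∈ Min, m ≤ a := by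
    intro a ha
    refine wf.induction (P := fun a => ∃ m ∈ Min, m ≤ a) ha ?_
    intro y hy ih
    by_cases hymin : ∀ b ∈ S, b ≤ y → b = y
    · exact ⟨y, ⟨hy, hymin⟩, le_rfl⟩
    · push_neg at hymin
      obtain ⟨b, hbS, hble, hbne⟩ := hymin
      obtain ⟨m, hm, hle⟩ := ih b hbS (lt_of_le_of_ne hble hbne)
      exact ⟨m, hm, hle.trans hble⟩
  refine ⟨hfin.toFinset, ?_, ?_⟩
  · intro x hx
    exact (hfin.mem_toFinset.1 hx).1
  · intro a ha
    obtain ⟨m, hm, hle⟩ := hmin a ha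
    exact ⟨m, hfin.mem_toFinset.2 hm, hle⟩

/-- Let `N ⊆ Γ ⊆ M` be submonoids of `ℤᵏ` (commutative and cancellative),
with `N` finitely generated and `M` a finitely generated `N`-module, i.e. `M` is the union of
finitely many translates `mᵢ + N`.  Then `Γ` is itself finitely generated. -/
theorem intermediate_monoid_fg (k : ℕ)
    (N Γ M : AddSubmonoid (Fin k → ℤ))
    (hNΓ : N ≤ Γ) (hΓM : Γ ≤ M)
    (hNfg : N.FG)
    (hmod : ∃ T : Finset (Fin k → ℤ), ↑T ⊆ (M : Set (Fin k → ℤ)) ∧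
      ∀ x ∈ M, ∃ t ∈ T, ∃ y ∈ N, x = t + y) :
    Γ.FG := by
  classical
  obtain ⟨s, hs⟩ := hNfg
  obtain ⟨T, hTM, hT⟩ := hmod
  -- the "evaluation" map from exponent vectors to `ℤᵏ`
  set φ : (↥s → ℕ) → (Fin k → ℤ) := fun a => ∑ i : ↥s, a i • (i : Fin k → ℤ) with hφ
  have hφ0 : φ 0 = 0 := by
    simp only [hφ, Pi.zero_apply, zero_smul, Finset.sum_const_zero]
  have hφadd : ∀ a b, φ (a + b) = φ a + φ b := by
    intro a b
    simp only [hφ, Pi.add_apply, add_smul]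
    exact Finset.sum_add_distrib
  have hφmem : ∀ a, φ a ∈ N := by
    intro a
    refine AddSubmonoid.sum_mem N fun i _ => AddSubmonoid.nsmul_mem N ?_ _
    have : (i : Fin k → ℤ) ∈ AddSubmonoid.closure (↑s : Set (Fin k → ℤ)) :=
      AddSubmonoid.subset_closure i.2
    rwa [hs] at this
  -- every element of `N` is in the range of `φ`
  have hφsurj : ∀ y ∈ N, ∃ a, φ a = y := by
    intro y hy
    let P : AddSubmonoid (Fin k → ℤ) :=
      { carrier := Set.range φ
        zero_mem' := ⟨0, hφ0⟩
        add_mem' := by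
          rintro x y ⟨a, rfl⟩ ⟨b, rfl⟩
          exact ⟨a + b, hφadd a b⟩ }
    have hsP : (↑s : Set (Fin k → ℤ)) ⊆ P := by
      intro g hg
      refine ⟨Pi.single ⟨g, hg⟩ 1, ?_⟩
      simp only [hφ]
      rw [Finset.sum_eq_single (⟨g, hg⟩ : ↥s)]
      · simp
      · intro i _ hne
        rw [Pi.single_eq_of_ne hne]
        simp
      · simp
    have : N ≤ P := by rw [← hs]; exact AddSubmonoid.closure_le.2 hsP
    exact this hy
  -- for each translate `t`, the exponent vectors landing in `Γ`
  have hsets : ∀ t : Fin k → ℤ, ∃ F : Finset (↥s → ℕ),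
      (↑F : Set (↥s → ℕ)) ⊆ {a | t + φ a ∈ Γ} ∧
      ∀ a ∈ ({a | t + φ a ∈ Γ} : Set (↥s → ℕ)), ∃ f ∈ F, f ≤ a :=
    fun t => dickson_lower_bounds {a | t + φ a ∈ Γ}
  choose F hF₁ hF₂ using hsets
  -- the generating set
  refine ⟨s ∪ T.biUnion (fun t => (F t).image (fun f => t + φ f)), le_antisymm ?_ ?_⟩
  · -- closure ⊆ Γ
    rw [AddSubmonoid.closure_le]
    intro x hx
    simp only [Finset.coe_union, Set.mem_union, Finset.coe_biUnion, Set.mem_iUnion,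
      Finset.coe_image, Set.mem_image, Finset.mem_coe] at hx
    rcases hx with hx | ⟨t, htT, f, hfF, rfl⟩
    · apply hNΓ
      rw [← hs]
      exact AddSubmonoid.subset_closure hx
    · exact hF₁ t (by exact_mod_cast hfF)
  · -- Γ ⊆ closure
    intro x hx
    obtain ⟨t, htT, y, hyN, rfl⟩ := hT x (hΓM hx)
    obtain ⟨a, rfl⟩ := hφsurj y hyN
    have haS : a ∈ ({b | t + φ b ∈ Γ} : Set (↥s → ℕ)) := hx
    obtain ⟨f, hfF, hfa⟩ := hF₂ t a haS
    obtain ⟨c, rfl⟩ := le_iff_exists_add.1 hfa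
    have h1 : t + φ f ∈ AddSubmonoid.closure
        (↑(s ∪ T.biUnion (fun t => (F t).image (fun f => t + φ f))) : Set (Fin k → ℤ)) := by
      apply AddSubmonoid.subset_closure
      simp only [Finset.coe_union, Set.mem_union, Finset.coe_biUnion, Set.mem_iUnion,
        Finset.coe_image, Set.mem_image]
      exact Or.inr ⟨t, htT, f, hfF, rfl⟩
    have h2 : φ c ∈ AddSubmonoid.closure
        (↑(s ∪ T.biUnion (fun t => (F t).image (fun f => t + φ f))) : Set (Fin k → ℤ)) := by
      have : φ c ∈ AddSubmonoid.closure (↑s : Set (Fin k → ℤ)) := by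
        rw [hs]; exact hφmem c
      exact AddSubmonoid.closure_mono (by simp) this
    have := AddSubmonoid.add_mem _ h1 h2
    rw [hφadd f c, ← add_assoc]
    exact this
end
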